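/- (Lemma 4, core) Let V be a finite type, f : Finset V → ℝ a monotone and submodular set function with f(∅) = 0, c : V → ℝ with 0 < c(v) ≤ B for all v, and B > 0 a budget. Let v_1, …, v_l be distinct elements of V, set S_0 = ∅ and S_i = {v_1, …, v_i}, and suppose that for each 0 ≤ i < l the element v_{i+1} maximizes (f(S_i ∪ {v}) − f(S_i))/c(v) over all v ∈ V \ S_i. If in addition Σ_{i=1}^{l} c(v_i) ≥ B/2, then for every T ⊆ V with Σ_{t ∈ T} c(t) ≤ B: f(S_l) ≥ (1 − 1/√e) · f(T). -/

import Mathlib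

lemma submod_sum {V : Type*} [DecidableEq V]
    (f : Finset V → ℝ)
    (hsub : ∀ A B : Finset V, A ⊆ B → ∀ v ∉ B,
      f (insert v A) - f A ≥ f (insert v B) - f B)
    (A T : Finset V) :
    f (A ∪ T) - f A ≤ ∑ t ∈ T \ A, (f (insert t A) - f A) := by
  induction T using Finset.induction_on with
  | empty => simp
  | @insert a s ha ih =>
    by_cases haA : a ∈ A
    · have h1 : A ∪ insert a s = A ∪ s := by
        rw [Finset.union_insert, Finset.insert_eq_self.2 (Finset.mem_union_left s haA)]
      have h2 : insert a s \ A = s \ A := Finset.insert_sdiff_of_mem s haA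
      rw [h1, h2]; exact ih
    · have h1 : A ∪ insert a s = insert a (A ∪ s) := Finset.union_insert ..
      have h2 : insert a s \ A = insert a (s \ A) := Finset.insert_sdiff_of_notMem s haA
      have h3 : a ∉ s \ A := by simp [ha]
      have h4 : a ∉ A ∪ s := by simp [ha, haA]
      rw [h1, h2, Finset.sum_insert h3]
      have h5 := hsub A (A ∪ s) Finset.subset_union_left a h4
      linarith


/-- Lemma 4, core: the cost-effective greedy chain whose
cumulative cost reaches at least half the budget `B` achieves a `(1 − 1/√e)`
fraction of the value of any budget-feasible set `T`. -/
theorem stmt13 {V : Type*} [Fintype V] [DecidableEq V]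
    (f : Finset V → ℝ)
    (hmono : ∀ A B : Finset V, A ⊆ B → f A ≤ f B)
    (hsub : ∀ A B : Finset V, A ⊆ B → ∀ v ∉ B,
      f (insert v A) - f A ≥ f (insert v B) - f B)
    (hf0 : f ∅ = 0)
    (B : ℝ) (hB : 0 < B)
    (c : V → ℝ) (hc : ∀ v, 0 < c v ∧ c v ≤ B)
    (l : ℕ) (v : ℕ → V)
    (hdist : Set.InjOn v (Set.Icc 1 l))
    (S : ℕ → Finset V) (hS0 : S 0 = ∅)
    (hSsucc : ∀ i < l, S (i + 1) = insert (v (i + 1)) (S i))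
    (hnotmem : ∀ i < l, v (i + 1) ∉ S i)
    (hgreedy : ∀ i < l, ∀ u : V, u ∉ S i →
      (f (insert u (S i)) - f (S i)) / c u ≤
      (f (insert (v (i + 1)) (S i)) - f (S i)) / c (v (i + 1)))
    (hcost : B / 2 ≤ ∑ i ∈ Finset.Icc 1 l, c (v i)) :
    ∀ T : Finset V, (∑ t ∈ T, c t) ≤ B →
      f (S l) ≥ (1 - 1 / Real.sqrt (Real.exp 1)) * f T := by
  intro T hT
  have hfT : 0 ≤ f T := hf0 ▸ hmono ∅ T (Finset.empty_subset T)
  -- per-step contraction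
  have key : ∀ i < l, f T - f (S (i + 1)) ≤ (1 - c (v (i + 1)) / B) * (f T - f (S i)) := by
    intro i hi
    set u := v (i + 1) with hu
    have hcu := (hc u).1
    have hδ : 0 ≤ f (insert u (S i)) - f (S i) := by
      have := hmono (S i) (insert u (S i)) (Finset.subset_insert _ _)
      linarith
    set ρ : ℝ := (f (insert u (S i)) - f (S i)) / c u with hρ
    have hρ0 : 0 ≤ ρ := div_nonneg hδ hcu.le
    have h1 : f T - f (S i) ≤ f (S i ∪ T) - f (S i) := by
      have := hmono T (S i ∪ T) Finset.subset_union_right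
      linarith
    have h2 := submod_sum f hsub (S i) T
    have h3 : ∑ t ∈ T \ S i, (f (insert t (S i)) - f (S i)) ≤ ∑ t ∈ T \ S i, c t * ρ := by
      refine Finset.sum_le_sum fun t ht => ?_
      have htS : t ∉ S i := (Finset.mem_sdiff.1 ht).2
      have hg := hgreedy i hi t htS
      have hct := (hc t).1
      calc f (insert t (S i)) - f (S i)
          = ((f (insert t (S i)) - f (S i)) / c t) * c t := by field_simp
        _ ≤ ρ * c t := by
            exact mul_le_mul_of_nonneg_right hg hct.le
        _ = c t * ρ := mul_comm _ _
    have h4 : ∑ t ∈ T \ S i, c t * ρ = (∑ t ∈ T \ S i, c t) * ρ := by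
      rw [Finset.sum_mul]
    have h5 : ∑ t ∈ T \ S i, c t ≤ B := by
      refine le_trans ?_ hT
      exact Finset.sum_le_sum_of_subset_of_nonneg (Finset.sdiff_subset)
        (fun t ht _ => (hc t).1.le)
    have h6 : f T - f (S i) ≤ B * ρ := by
      have := mul_le_mul_of_nonneg_right h5 hρ0
      rw [h4] at h3
      linarith
    have h7 : f (S (i + 1)) = f (insert u (S i)) := by rw [hSsucc i hi]
    have h8 : ρ * c u = f (insert u (S i)) - f (S i) := div_mul_cancel₀ _ hcu.ne'
    -- (c u / B) * (f T - f (S i)) ≤ c u * ρ = δ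
    have h9 : (c u / B) * (f T - f (S i)) ≤ c u * ρ := by
      rw [div_mul_eq_mul_div, div_le_iff₀ hB]
      calc c u * (f T - f (S i)) ≤ c u * (B * ρ) := by
            exact mul_le_mul_of_nonneg_left h6 hcu.le
        _ = c u * ρ * B := by ring
    rw [h7]
    have : c u * ρ = f (insert u (S i)) - f (S i) := by rw [mul_comm]; exact h8
    rw [this] at h9
    have expand : (1 - c u / B) * (f T - f (S i))
        = (f T - f (S i)) - (c u / B) * (f T - f (S i)) := by ring
    linarith
  -- nonneg factors
  have hfac : ∀ j, 0 ≤ 1 - c (v j) / B := by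
    intro j
    have := (hc (v j)).2
    have : c (v j) / B ≤ 1 := (div_le_one hB).2 this
    linarith
  -- induction
  have main : ∀ i, i ≤ l →
      f T - f (S i) ≤ (∏ j ∈ Finset.Icc 1 i, (1 - c (v j) / B)) * f T := by
    intro i
    induction i with
    | zero => intro _; simp [hS0, hf0]
    | succ n ih =>
      intro h
      have hn : n < l := h
      have hprev := ih hn.le
      have hprod : ∏ j ∈ Finset.Icc 1 (n + 1), (1 - c (v j) / B)
          = (∏ j ∈ Finset.Icc 1 n, (1 - c (v j) / B)) * (1 - c (v (n + 1)) / B) :=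
        Finset.prod_Icc_succ_top (Nat.succ_le_succ (Nat.zero_le n)) _
      calc f T - f (S (n + 1)) ≤ (1 - c (v (n + 1)) / B) * (f T - f (S n)) := key n hn
        _ ≤ (1 - c (v (n + 1)) / B) * ((∏ j ∈ Finset.Icc 1 n, (1 - c (v j) / B)) * f T) :=
            mul_le_mul_of_nonneg_left hprev (hfac (n + 1))
        _ = (∏ j ∈ Finset.Icc 1 (n + 1), (1 - c (v j) / B)) * f T := by
            rw [hprod]; ring
  have hmain := main l le_rfl
  -- bound the product by exp(-1/2)
  have hprodexp : (∏ j ∈ Finset.Icc 1 l, (1 - c (v j) / B)) ≤ Real.exp (-(1 / 2)) := by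
    calc ∏ j ∈ Finset.Icc 1 l, (1 - c (v j) / B)
        ≤ ∏ j ∈ Finset.Icc 1 l, Real.exp (-(c (v j) / B)) := by
          refine Finset.prod_le_prod (fun j _ => hfac j) (fun j _ => ?_)
          have := Real.add_one_le_exp (-(c (v j) / B))
          linarith
      _ = Real.exp (∑ j ∈ Finset.Icc 1 l, -(c (v j) / B)) := (Real.exp_sum _ _).symm
      _ ≤ Real.exp (-(1 / 2)) := by
          apply Real.exp_le_exp.2
          have : ∑ j ∈ Finset.Icc 1 l, -(c (v j) / B)
              = -((∑ j ∈ Finset.Icc 1 l, c (v j)) / B) := by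
            rw [Finset.sum_div]; exact Finset.sum_neg_distrib _
          rw [this]
          have h12 : (1 : ℝ) / 2 ≤ (∑ j ∈ Finset.Icc 1 l, c (v j)) / B := by
            rw [le_div_iff₀ hB]
            linarith
          linarith
  have hprodnn : 0 ≤ ∏ j ∈ Finset.Icc 1 l, (1 - c (v j) / B) :=
    Finset.prod_nonneg (fun j _ => hfac j)
  have hfin : f T - f (S l) ≤ Real.exp (-(1 / 2)) * f T := by
    calc f T - f (S l) ≤ (∏ j ∈ Finset.Icc 1 l, (1 - c (v j) / B)) * f T := hmain
      _ ≤ Real.exp (-(1 / 2)) * f T := mul_le_mul_of_nonneg_right hprodexp hfT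
  have hsqrt : Real.sqrt (Real.exp 1) = Real.exp (1 / 2) := by
    have h : Real.exp 1 = Real.exp (1 / 2) * Real.exp (1 / 2) := by
      rw [← Real.exp_add]; norm_num
    rw [h, Real.sqrt_mul_self (Real.exp_pos _).le]
  have hinv : 1 / Real.sqrt (Real.exp 1) = Real.exp (-(1 / 2)) := by
    rw [hsqrt, Real.exp_neg, one_div]
  rw [ge_iff_le, hinv]
  nlinarith [hfin]
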